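/- Let X be a metric space, f: X → ℝ∪{+∞}, x ∈ dom f with f(x) > 0, and φ: ℝ → ℝ nondecreasing with φ(t) ≤ 0 for t ≤ 0, φ(t) > 0 for t > 0, differentiable on ]0, f(x)] with φ'(f(x)) > 0, and φ' nonincreasing on ]0,f(x)[. Then the nonlocal slope satisfies |∇(φ∘f)|⋄(x) ≥ φ'(f(x))·|∇f|⋄(x). -/

import Mathlib

open Filter EMetric Set Topology
open scoped ENNReal NNReal

noncomputable def epos (a : EReal) : ℝ≥0∞ := if a = ⊤ then ⊤ else ENNReal.ofReal a.toReal

noncomputable def nslope {X : Type*} [MetricSpace X] (f : X → EReal) (x : X) : ℝ≥0∞ :=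
  ⨆ u ∈ {u : X | u ≠ x}, epos (f x - max (f u) 0) / edist u x

noncomputable def lslope {X : Type*} [MetricSpace X] (f : X → EReal) (x : X) : ℝ≥0∞ :=
  Filter.limsup (fun u => epos (f x - f u) / edist u x) (𝓝[≠] x)

lemma epos_coe (r : ℝ) : epos (r : EReal) = ENNReal.ofReal r := by
  simp [epos]

lemma epos_bot : epos (⊥ : EReal) = 0 := by
  simp [epos]

/-- derivative at the right endpoint is a lower bound for `φ'` on the open interval -/
lemma key0 (a : ℝ) (ha : 0 < a) (φ φ' : ℝ → ℝ)
    (hder : ∀ t ∈ Set.Ioc (0:ℝ) a, HasDerivAt φ (φ' t) t)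
    (hanti : AntitoneOn φ' (Set.Ioo 0 a)) :
    ∀ s ∈ Set.Ioo (0:ℝ) a, φ' a ≤ φ' s := by
  intro s hs
  have hslope : Filter.Tendsto (slope φ a) (𝓝[Set.Ioo s a] a) (𝓝 (φ' a)) := by
    have h := (hasDerivAt_iff_tendsto_slope).1 (hder a ⟨ha, le_refl a⟩)
    exact h.mono_left (nhdsWithin_mono a (fun t ht => ht.2.ne))
  have hne : (𝓝[Set.Ioo s a] a).NeBot := right_nhdsWithin_Ioo_neBot hs.2
  refine le_of_tendsto hslope ?_
  filter_upwards [eventually_mem_nhdsWithin] with t ht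
  -- t ∈ Ioo s a; MVT on [t, a]
  obtain ⟨c, hc, hceq⟩ := exists_hasDerivAt_eq_slope φ φ' ht.2
    (fun y hy => (hder y ⟨lt_of_lt_of_le (lt_trans hs.1 ht.1) hy.1, hy.2⟩).continuousAt.continuousWithinAt)
    (fun y hy => hder y ⟨lt_trans (lt_trans hs.1 ht.1) hy.1, hy.2.le⟩)
  have hcs : φ' c ≤ φ' s :=
    hanti hs ⟨lt_trans hs.1 (lt_trans ht.1 hc.1), hc.2⟩ (le_of_lt (lt_trans ht.1 hc.1))
  have : slope φ a t = φ' c := by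
    rw [slope_comm, slope_def_field, hceq]
  rw [this]; exact hcs

/-- Key real inequality -/
lemma key_real (a : ℝ) (ha : 0 < a) (φ φ' : ℝ → ℝ)
    (hφneg : ∀ t ≤ (0:ℝ), φ t ≤ 0) (hφpos : ∀ t > (0:ℝ), 0 < φ t)
    (hder : ∀ t ∈ Set.Ioc (0:ℝ) a, HasDerivAt φ (φ' t) t)
    (hanti : AntitoneOn φ' (Set.Ioo 0 a)) :
    ∀ m, 0 ≤ m → m < a → φ' a * (a - m) ≤ φ a - max (φ m) 0 := by
  have hmvt : ∀ m, 0 < m → m < a → φ' a * (a - m) ≤ φ a - φ m := by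
    intro m hm hma
    obtain ⟨c, hc, hceq⟩ := exists_hasDerivAt_eq_slope φ φ' hma
      (fun y hy => (hder y ⟨lt_of_lt_of_le hm hy.1, hy.2⟩).continuousAt.continuousWithinAt)
      (fun y hy => hder y ⟨lt_trans hm hy.1, hy.2.le⟩)
    have h1 : φ' a ≤ φ' c := key0 a ha φ φ' hder hanti c ⟨lt_trans hm hc.1, hc.2⟩
    have h2 : φ' c * (a - m) = φ a - φ m := by
      rw [hceq]; exact div_mul_cancel₀ _ (ne_of_gt (by linarith))
    calc φ' a * (a - m) ≤ φ' c * (a - m) :=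
          mul_le_mul_of_nonneg_right h1 (by linarith)
      _ = φ a - φ m := h2
  intro m hm hma
  rcases eq_or_lt_of_le hm with hm0 | hm0
  · -- m = 0
    subst hm0
    have hmax : max (φ 0) 0 = 0 := max_eq_right (hφneg 0 le_rfl)
    rw [hmax, sub_zero, sub_zero]
    -- limit argument: φ' a * (a - t) ≤ φ a for t ∈ (0, a)
    have hb : ∀ t ∈ Set.Ioo (0:ℝ) a, φ' a * (a - t) ≤ φ a := by
      intro t ht
      have := hmvt t ht.1 ht.2
      have := hφpos t ht.1
      linarith
    have htend : Filter.Tendsto (fun t => φ' a * (a - t)) (𝓝[Set.Ioo (0:ℝ) a] 0)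
        (𝓝 (φ' a * (a - 0))) := by
      apply Filter.Tendsto.mono_left _ nhdsWithin_le_nhds
      exact (tendsto_const_nhds.mul ((tendsto_const_nhds.sub tendsto_id)))
    have hne : (𝓝[Set.Ioo (0:ℝ) a] 0).NeBot := left_nhdsWithin_Ioo_neBot ha
    have := le_of_tendsto htend
      (Filter.eventually_iff_exists_mem.2 ⟨Set.Ioo 0 a, self_mem_nhdsWithin, hb⟩)
    simpa using this
  · have hmax : max (φ m) 0 = φ m := max_eq_left (hφpos m hm0).le
    rw [hmax]
    exact hmvt m hm0 hma

/-- nonlocal lslope chain rule inequality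
`|∇(φ∘f)|⋄(x) ≥ φ'(f(x))·|∇f|⋄(x)` for a nondecreasing `φ : ℝ → ℝ` with `φ ≤ 0` on `ℝ₋`,
`φ > 0` on `ℝ₊`, differentiable on `]0, f(x)]` with `φ'(f(x)) > 0` and `φ'` nonincreasing on
`]0, f(x)[`. -/
theorem nslope_comp_ge {X : Type*} [MetricSpace X] (f : X → EReal) (hbot : ∀ u, f u ≠ ⊥)
    (x : X) (hdom : f x ≠ ⊤) (hpos : 0 < f x)
    (φ φ' : ℝ → ℝ) (hφmono : Monotone φ)
    (hφneg : ∀ t ≤ (0 : ℝ), φ t ≤ 0) (hφpos : ∀ t > (0 : ℝ), 0 < φ t)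
    (hder : ∀ t ∈ Set.Ioc (0 : ℝ) (f x).toReal, HasDerivAt φ (φ' t) t)
    (hd : 0 < φ' (f x).toReal)
    (hanti : AntitoneOn φ' (Set.Ioo (0 : ℝ) (f x).toReal)) :
    ENNReal.ofReal (φ' (f x).toReal) * nslope f x ≤
      nslope (fun u => if f u = ⊤ then (⊤ : EReal) else ((φ ((f u).toReal)) : EReal)) x := by
  set a : ℝ := (f x).toReal with hA
  have hfx : f x = (a : EReal) := (EReal.coe_toReal hdom (hbot x)).symm
  have ha : 0 < a := by
    have : (0 : EReal) < (a : EReal) := hfx ▸ hpos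
    exact_mod_cast this
  set g : X → EReal := fun u => if f u = ⊤ then (⊤ : EReal) else ((φ ((f u).toReal)) : EReal)
    with hg
  have hgx : g x = ((φ a : ℝ) : EReal) := by simp [hg, hdom]; rfl
  unfold nslope
  rw [ENNReal.mul_iSup]
  refine iSup_le fun u => ?_
  rw [ENNReal.mul_iSup]
  refine iSup_le fun hu => ?_
  refine le_iSup₂_of_le u hu ?_
  rw [← mul_div_assoc]
  refine ENNReal.div_le_div_right ?_ _
  -- main per-point inequality
  by_cases hfu : f u = ⊤
  · have : f x - max (f u) 0 = ⊥ := by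
      rw [hfu, max_eq_left le_top, EReal.sub_top]
    rw [this, epos_bot, mul_zero]
    exact zero_le
  · set b : ℝ := (f u).toReal with hB
    have hfub : f u = (b : EReal) := (EReal.coe_toReal hfu (hbot u)).symm
    have hmaxf : max (f u) 0 = ((max b 0 : ℝ) : EReal) := by
      rw [hfub]
      exact_mod_cast (EReal.coe_strictMono.monotone.map_max).symm
    have hL : f x - max (f u) 0 = ((a - max b 0 : ℝ) : EReal) := by
      rw [hfx, hmaxf]; exact_mod_cast rfl
    have hgu : g u = ((φ b : ℝ) : EReal) := by simp [hg, hfu]; rfl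
    have hmaxg : max (g u) 0 = ((max (φ b) 0 : ℝ) : EReal) := by
      rw [hgu]
      exact_mod_cast (EReal.coe_strictMono.monotone.map_max).symm
    have hR : g x - max (g u) 0 = ((φ a - max (φ b) 0 : ℝ) : EReal) := by
      rw [hgx, hmaxg]; exact_mod_cast rfl
    rw [hL, hR, epos_coe, epos_coe]
    by_cases hba : a ≤ max b 0
    · rw [show ENNReal.ofReal (a - max b 0) = 0 from
        ENNReal.ofReal_eq_zero.2 (sub_nonpos.2 hba), mul_zero]
      exact zero_le
    · push_neg at hba
      set m : ℝ := max b 0 with hm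
      have hm0 : 0 ≤ m := le_max_right b 0
      have hkey : φ' a * (a - m) ≤ φ a - max (φ m) 0 :=
        key_real a ha φ φ' hφneg hφpos hder hanti m hm0 hba
      have hφbm : max (φ b) 0 ≤ max (φ m) 0 :=
        max_le_max (hφmono (le_max_left b 0)) le_rfl
      rw [← ENNReal.ofReal_mul hd.le]
      exact ENNReal.ofReal_le_ofReal (by linarith)
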